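/- arXiv:2106.15677 — 4 statements merged into one kernel-verified Lean document; each statement's English description precedes it below -/
import Mathlib

section
/- Fix integers t and n with n ≥ 1 and t² < 4n, and a prime p ≥ 5 with p ∤ n and p ∤ (t² − 4n) (i.e., p is unramified in ℚ(√(t²−4n))). Let k ≠ 2 be a non-negative even integer and m ≥ 1 an integer. Then: if k = 0, n · P_{m(p²−1)}(t, n) ≡ −1 (mod p); and if k ≥ 4, P_{k+m(p²−1)}(t, n) ≡ P_k(t, n) (mod p). -/
open scoped UpperHalfPlane
open Complex Polynomial

noncomputable section

namespace SSTrace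

/-- `P t n k` is the coefficient of `x^(k-2)` in the formal power series expansion
of `(1 - t·x + n·x²)⁻¹`. -/
def P (t n : ℤ) (k : ℕ) : ℤ :=
  PowerSeries.coeff (R := ℤ) (k - 2)
    (PowerSeries.invOfUnit
      (1 - PowerSeries.C (R := ℤ) t * PowerSeries.X + PowerSeries.C (R := ℤ) n * PowerSeries.X ^ 2) 1)

/-- The auxiliary integer sequence satisfying a two-term linear recurrence. -/
def seq (t n : ℤ) : ℕ → ℤ
  | 0 => 1
  | 1 => t
  | (j + 2) => t * seq t n (j + 1) - n * seq t n j

lemma seq_mul (t n : ℤ) :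
    (1 - PowerSeries.C (R := ℤ) t * PowerSeries.X + PowerSeries.C (R := ℤ) n * PowerSeries.X ^ 2) *
      PowerSeries.mk (seq t n) = 1 := by
  ext j
  rw [add_mul, sub_mul, one_mul, mul_assoc, mul_assoc, map_add, map_sub,
    PowerSeries.coeff_C_mul, PowerSeries.coeff_C_mul]
  match j with
  | 0 =>
    simp [PowerSeries.coeff_zero_X_mul, PowerSeries.coeff_X_pow_mul', seq]
  | 1 =>
    rw [PowerSeries.coeff_succ_X_mul, PowerSeries.coeff_X_pow_mul']
    simp [seq]
  | (j + 2) =>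
    rw [PowerSeries.coeff_succ_X_mul, show j + 2 = j + 2 from rfl,
      PowerSeries.coeff_X_pow_mul (PowerSeries.mk (seq t n)) 2 j]
    simp only [PowerSeries.coeff_mk, PowerSeries.coeff_one, Nat.add_eq_zero, OfNat.ofNat_ne_zero,
      and_false, if_false]
    rw [show seq t n (j + 2) = t * seq t n (j + 1) - n * seq t n j from rfl]
    ring

lemma P_eq_seq (t n : ℤ) (k : ℕ) : P t n k = seq t n (k - 2) := by
  set S : PowerSeries ℤ :=
    1 - PowerSeries.C (R := ℤ) t * PowerSeries.X + PowerSeries.C (R := ℤ) n * PowerSeries.X ^ 2 with hS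
  have hconst : PowerSeries.constantCoeff (R := ℤ) S = ((1 : ℤˣ) : ℤ) := by
    simp [hS]
  have h1 : S * PowerSeries.invOfUnit S 1 = 1 := PowerSeries.mul_invOfUnit S 1 hconst
  have h2 : S * PowerSeries.mk (seq t n) = 1 := seq_mul t n
  have key : PowerSeries.invOfUnit S 1 = PowerSeries.mk (seq t n) := by
    calc PowerSeries.invOfUnit S 1 = PowerSeries.invOfUnit S 1 * (S * PowerSeries.mk (seq t n)) :=
          by rw [h2, mul_one]
      _ = (S * PowerSeries.invOfUnit S 1) * PowerSeries.mk (seq t n) := by ring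
      _ = PowerSeries.mk (seq t n) := by rw [h1, one_mul]
  rw [P, ← hS, key, PowerSeries.coeff_mk]

/-- Abstract key lemma over a field. -/
lemma lemA {K : Type*} [Field K] (ρ σ : K) (hne : ρ ≠ σ) (N : ℕ) (hN : 2 ≤ N)
    (h1 : ρ ^ N = 1) (h2 : σ ^ N = 1) (c : ℕ → K) (hc0 : c 0 = 1) (hc1 : c 1 = ρ + σ)
    (hrec : ∀ j, c (j + 2) = (ρ + σ) * c (j + 1) - ρ * σ * c j) :
    (∀ j, c (j + N) = c j) ∧ ρ * σ * c (N - 2) = -1 := by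
  have hd : ρ - σ ≠ 0 := sub_ne_zero.mpr hne
  have closed : ∀ j, (ρ - σ) * c j = ρ ^ (j + 1) - σ ^ (j + 1) := by
    intro j
    induction j using Nat.twoStepInduction with
    | zero => simp [hc0]
    | one => rw [hc1]; ring
    | more j ih1 ih2 =>
      rw [hrec]
      have e1 : (ρ - σ) * c (j + 1) = ρ ^ (j + 2) - σ ^ (j + 2) := ih2
      have e0 : (ρ - σ) * c j = ρ ^ (j + 1) - σ ^ (j + 1) := ih1
      linear_combination (ρ + σ) * e1 - ρ * σ * e0
  constructor
  · intro j
    apply mul_left_cancel₀ hd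
    rw [closed, closed]
    linear_combination ρ ^ (j + 1) * h1 - σ ^ (j + 1) * h2
  · obtain ⟨M, rfl⟩ : ∃ M, N = M + 2 := ⟨N - 2, by omega⟩
    have e := closed M
    have hM : M + 2 - 2 = M := by omega
    rw [hM]
    apply mul_left_cancel₀ hd
    linear_combination ρ * σ * e + σ * h1 - ρ * h2

lemma zkey (p : ℕ) [Fact p.Prime] (hp : 5 ≤ p) (t' n' : ZMod p) (hn : n' ≠ 0)
    (hd : t' ^ 2 - 4 * n' ≠ 0) (N : ℕ) (hN : 2 ≤ N) (hdvd : p ^ 2 - 1 ∣ N)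
    (c : ℕ → ZMod p) (hc0 : c 0 = 1) (hc1 : c 1 = t')
    (hrec : ∀ j, c (j + 2) = t' * c (j + 1) - n' * c j) :
    (∀ j, c (j + N) = c j) ∧ n' * c (N - 2) = -1 := by
  have hfac : p ^ 2 - 1 = (p - 1) * (p + 1) := by
    obtain ⟨q, rfl⟩ : ∃ q, p = q + 1 := ⟨p - 1, by omega⟩
    have h : (q + 1) ^ 2 = q * (q + 2) + 1 := by ring
    rw [h]
    simp [Nat.add_sub_cancel]
  by_cases hsq : ∃ x : ZMod p, x ^ 2 = t' ^ 2 - 4 * n'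
  · -- split case: roots in ZMod p
    obtain ⟨x, hx⟩ := hsq
    have hx0 : x ≠ 0 := by
      intro h
      apply hd
      rw [← hx, h]
      ring
    have h2 : (2 : ZMod p) ≠ 0 := by
      have hpp : p.Prime := Fact.out
      intro h
      have : ((2 : ℕ) : ZMod p) = 0 := by exact_mod_cast h
      rw [ZMod.natCast_eq_zero_iff] at this
      have := Nat.le_of_dvd (by norm_num) this
      omega
    set ρ : ZMod p := (t' + x) / 2 with hρ
    set σ : ZMod p := (t' - x) / 2 with hσ
    have hsum : ρ + σ = t' := by
      rw [hρ, hσ]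
      field_simp
      ring
    have hprod : ρ * σ = n' := by
      rw [hρ, hσ]
      field_simp
      linear_combination -hx
    have hne : ρ ≠ σ := by
      intro h
      apply hx0
      rw [hρ, hσ] at h
      have h2x : (2 : ZMod p) * x = 0 := by
        field_simp at h
        linear_combination h
      rcases mul_eq_zero.mp h2x with h' | h'
      exacts [absurd h' h2, h']
    have hρ0 : ρ ≠ 0 := by
      intro h
      apply hn
      rw [← hprod, h, zero_mul]
    have hσ0 : σ ≠ 0 := by
      intro h
      apply hn
      rw [← hprod, h, mul_zero]
    obtain ⟨e, rfl⟩ := hdvd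
    have hρN : ρ ^ ((p ^ 2 - 1) * e) = 1 := by
      rw [hfac, mul_assoc, pow_mul, ZMod.pow_card_sub_one_eq_one hρ0, one_pow]
    have hσN : σ ^ ((p ^ 2 - 1) * e) = 1 := by
      rw [hfac, mul_assoc, pow_mul, ZMod.pow_card_sub_one_eq_one hσ0, one_pow]
    have hres := lemA ρ σ hne _ hN hρN hσN c hc0 (by rw [hc1, hsum])
      (fun j => by rw [hrec, hsum, hprod])
    rwa [hprod] at hres
  · -- inert case: pass to the quadratic extension
    push_neg at hsq
    set f : (ZMod p)[X] :=
      Polynomial.C 1 * Polynomial.X ^ 2 + Polynomial.C (-t') * Polynomial.X + Polynomial.C n'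
      with hf
    have hdeg : f.natDegree = 2 := Polynomial.natDegree_quadratic one_ne_zero
    have hfne : f ≠ 0 := fun h => by simp [h] at hdeg
    have hroots : f.roots = 0 := by
      rw [Multiset.eq_zero_iff_forall_notMem]
      intro r hr
      rw [Polynomial.mem_roots hfne, Polynomial.IsRoot, hf] at hr
      simp only [Polynomial.eval_add, Polynomial.eval_mul, Polynomial.eval_C, Polynomial.eval_pow,
        Polynomial.eval_X, one_mul] at hr
      exact hsq (2 * r - t') (by linear_combination 4 * hr)
    have hirr : Irreducible f :=
      (Polynomial.irreducible_iff_roots_eq_zero_of_degree_le_three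
        (by omega) (by omega)).mpr hroots
    haveI : Fact (Irreducible f) := ⟨hirr⟩
    set K := AdjoinRoot f with hK
    set φ : ZMod p →+* K := AdjoinRoot.of f with hφ
    have hinj : Function.Injective φ := φ.injective
    set ρ : K := AdjoinRoot.root f with hρ
    have hrel : ρ ^ 2 - φ t' * ρ + φ n' = 0 := by
      have h := AdjoinRoot.eval₂_root f
      rw [hf] at h
      simp only [Polynomial.eval₂_add, Polynomial.eval₂_mul, Polynomial.eval₂_neg,
        Polynomial.eval₂_C, Polynomial.eval₂_X, Polynomial.eval₂_pow, map_neg, map_one,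
        one_mul] at h
      linear_combination h
    set σ : K := φ t' - ρ with hσ
    have hsum : ρ + σ = φ t' := by rw [hσ]; ring
    have hprod : ρ * σ = φ n' := by rw [hσ]; linear_combination -hrel
    have hn'K : φ n' ≠ 0 := fun h => hn (hinj (by rwa [map_zero]))
    have hρ0 : ρ ≠ 0 := fun h => hn'K (by rw [← hprod, h, zero_mul])
    have hσ0 : σ ≠ 0 := fun h => hn'K (by rw [← hprod, h, mul_zero])
    have hne : ρ ≠ σ := by
      intro h
      have hsq2 : (ρ - σ) ^ 2 = φ (t' ^ 2 - 4 * n') := by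
        rw [hσ, map_sub, map_mul, map_pow]
        have h4 : φ (4 : ZMod p) = (4 : K) := map_ofNat φ 4
        rw [h4]
        linear_combination (4 : K) * hrel
      rw [h, sub_self] at hsq2
      have : φ (t' ^ 2 - 4 * n') = 0 := by rw [← hsq2]; ring
      exact hd (hinj (by rwa [map_zero]))
    -- finiteness and cardinality
    have hmonic : f.Monic := by
      rw [Polynomial.Monic, Polynomial.leadingCoeff, hdeg, hf]
      simp [Polynomial.coeff_add, Polynomial.coeff_C, Polynomial.coeff_X, Polynomial.coeff_X_pow]
    let pb := AdjoinRoot.powerBasis hfne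
    haveI : Fintype K := Module.fintypeOfFintype pb.basis
    have hcard : Fintype.card K = p ^ 2 := by
      rw [Module.card_fintype pb.basis, ZMod.card, Fintype.card_fin]
      congr 1
    obtain ⟨e, rfl⟩ := hdvd
    have hρN : ρ ^ ((p ^ 2 - 1) * e) = 1 := by
      have h := FiniteField.pow_card_sub_one_eq_one ρ hρ0
      rw [hcard] at h
      rw [pow_mul, h, one_pow]
    have hσN : σ ^ ((p ^ 2 - 1) * e) = 1 := by
      have h := FiniteField.pow_card_sub_one_eq_one σ hσ0
      rw [hcard] at h
      rw [pow_mul, h, one_pow]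
    obtain ⟨hper, hval⟩ := lemA ρ σ hne _ hN hρN hσN (fun j => φ (c j))
      (by simp [hc0]) (by simp [hc1, hsum])
      (fun j => by
        rw [hrec j, map_sub, map_mul, map_mul, ← hsum, ← hprod])
    constructor
    · intro j
      exact hinj (hper j)
    · apply hinj
      rw [map_mul, map_neg, map_one, ← hprod]
      exact hval

/-- Lemma 2.4 (unramified case): if `p ∤ n`, `p ∤ t² - 4n` and `t² < 4n`, then for even
`k ≠ 2` and `m ≥ 1`: `P_{m(p²-1)}(t,n) ≡ -n⁻¹ (mod p)` when `k = 0`, and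
`P_{k+m(p²-1)}(t,n) ≡ P_k(t,n) (mod p)` when `k ≥ 4`. -/
theorem P_unramified (p : ℕ) [Fact p.Prime] (hp : 5 ≤ p) (t n : ℤ) (hn : 1 ≤ n)
    (hdisc : t ^ 2 < 4 * n) (hpn : ¬ (p : ℤ) ∣ n) (hpd : ¬ (p : ℤ) ∣ (t ^ 2 - 4 * n))
    (k : ℕ) (hke : Even k) (hk2 : k ≠ 2) (m : ℕ) (hm : 1 ≤ m) :
    (k = 0 → n * P t n (m * (p ^ 2 - 1)) ≡ -1 [ZMOD (p : ℤ)]) ∧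
    (4 ≤ k → P t n (k + m * (p ^ 2 - 1)) ≡ P t n k [ZMOD (p : ℤ)]) := by
  set N := m * (p ^ 2 - 1) with hNdef
  have hpbig : 25 ≤ p ^ 2 := by nlinarith
  have hle : p ^ 2 - 1 ≤ N := Nat.le_mul_of_pos_left _ hm
  have hN2 : 2 ≤ N := by omega
  have hdvd : p ^ 2 - 1 ∣ N := dvd_mul_left _ _
  have hn' : ((n : ℤ) : ZMod p) ≠ 0 := by
    rwa [Ne, ZMod.intCast_zmod_eq_zero_iff_dvd]
  have hd' : ((t : ℤ) : ZMod p) ^ 2 - 4 * ((n : ℤ) : ZMod p) ≠ 0 := by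
    intro h
    apply hpd
    rw [← ZMod.intCast_zmod_eq_zero_iff_dvd]
    push_cast
    linear_combination h
  obtain ⟨hper, hval⟩ := zkey p hp ((t : ℤ) : ZMod p) ((n : ℤ) : ZMod p) hn' hd' N hN2 hdvd
    (fun j => ((seq t n j : ℤ) : ZMod p)) (by simp [seq]) (by simp [seq])
    (fun j => by
      show ((seq t n (j + 2) : ℤ) : ZMod p) = _
      rw [show seq t n (j + 2) = t * seq t n (j + 1) - n * seq t n j from rfl]
      push_cast
      ring)
  constructor
  · intro _
    rw [show ((p : ℤ)) = ((p : ℕ) : ℤ) from rfl, ← ZMod.intCast_eq_intCast_iff]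
    rw [P_eq_seq]
    push_cast
    exact hval
  · intro hk4
    rw [show ((p : ℤ)) = ((p : ℕ) : ℤ) from rfl, ← ZMod.intCast_eq_intCast_iff]
    rw [P_eq_seq, P_eq_seq]
    rw [show k + N - 2 = (k - 2) + N by omega]
    exact hper (k - 2)

end SSTrace
end
end

section
/- Fix integers t and n with n ≥ 1 and t² ≤ 4n, and a prime p ≥ 5 with p ∤ n and p | (t² − 4n) (this includes the case t² = 4n). Let k ≠ 2 be a non-negative even integer and m ≥ 1 an integer. Then n · P_{k+m(p²−1)}(t, n) ≡ (k − m − 1) · n^{k/2} (mod p); equivalently, P_{k+m(p²−1)}(t, n) ≡ (k − m − 1) · n^{(k−2)/2} (mod p), interpreting n^{(k−2)/2} as the inverse of n mod p when k = 0. -/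
open scoped UpperHalfPlane
open Complex Polynomial

noncomputable section

namespace SSTrace

/-- The Lucas-type sequence. -/
def a (t n : ℤ) : ℕ → ℤ
  | 0 => 1
  | 1 => t
  | (j + 2) => t * a t n (j + 1) - n * a t n j

lemma mul_mk_a (t n : ℤ) :
    (1 - PowerSeries.C (R := ℤ) t * PowerSeries.X + PowerSeries.C (R := ℤ) n * PowerSeries.X ^ 2) *
      PowerSeries.mk (a t n) = 1 := by
  ext j
  rw [add_mul, sub_mul, one_mul, mul_assoc, mul_assoc]
  match j with
  | 0 => simp [a]
  | 1 =>
    simp only [map_add, map_sub, PowerSeries.coeff_C_mul, PowerSeries.coeff_succ_X_mul,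
      PowerSeries.coeff_X_pow_mul']
    simp [a]
  | (j + 2) =>
    simp only [map_add, map_sub, PowerSeries.coeff_C_mul, PowerSeries.coeff_succ_X_mul,
      PowerSeries.coeff_X_pow_mul', PowerSeries.coeff_mk, PowerSeries.coeff_one]
    rw [if_pos (by omega), if_neg (by omega)]
    have h2 : j + 2 - 2 = j := rfl
    have h1 : j + 2 - 1 = j + 1 := rfl
    rw [h2]
    rw [show a t n (j + 2) = t * a t n (j + 1) - n * a t n j from rfl]
    ring

lemma P_eq_a (t n : ℤ) (k : ℕ) : P t n k = a t n (k - 2) := by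
  have hc : PowerSeries.constantCoeff (R := ℤ)
      (1 - PowerSeries.C (R := ℤ) t * PowerSeries.X + PowerSeries.C (R := ℤ) n * PowerSeries.X ^ 2) =
      ((1 : ℤˣ) : ℤ) := by simp
  have h1 := PowerSeries.mul_invOfUnit _ _ hc
  have h2 := mul_mk_a t n
  have : PowerSeries.invOfUnit
      (1 - PowerSeries.C (R := ℤ) t * PowerSeries.X + PowerSeries.C (R := ℤ) n * PowerSeries.X ^ 2) 1 =
      PowerSeries.mk (a t n) := by
    have h3 : PowerSeries.mk (a t n) *
        ((1 - PowerSeries.C (R := ℤ) t * PowerSeries.X + PowerSeries.C (R := ℤ) n * PowerSeries.X ^ 2) *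
          PowerSeries.invOfUnit
            (1 - PowerSeries.C (R := ℤ) t * PowerSeries.X + PowerSeries.C (R := ℤ) n * PowerSeries.X ^ 2) 1) =
        PowerSeries.mk (a t n) := by rw [h1, mul_one]
    rw [← mul_assoc, mul_comm (PowerSeries.mk (a t n)), h2, one_mul] at h3
    exact h3
  rw [P, this, PowerSeries.coeff_mk]

lemma a_cast {p : ℕ} [Fact p.Prime] (t n : ℤ) (r : ZMod p)
    (ht : (t : ZMod p) = 2 * r) (hn : (n : ZMod p) = r ^ 2) :
    ∀ j : ℕ, ((a t n j : ℤ) : ZMod p) = (j + 1) * r ^ j := by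
  intro j
  induction j using Nat.strong_induction_on with
  | _ j ih =>
    match j with
    | 0 => simp [a]
    | 1 =>
      show ((t : ℤ) : ZMod p) = _
      rw [ht]; push_cast; ring
    | (j + 2) =>
      show ((t * a t n (j + 1) - n * a t n j : ℤ) : ZMod p) = _
      push_cast
      rw [ih (j + 1) (by omega), ih j (by omega), ht, hn]
      push_cast
      ring

/-- Lemma 2.4 (ramified case): if `p ∤ n`, `p ∣ t² - 4n`, and `t² ≤ 4n`, then for even
`k ≠ 2` and `m ≥ 1`: `n · P_{k+m(p²-1)}(t,n) ≡ (k - m - 1) · n^{k/2} (mod p)`. -/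
theorem P_ramified (p : ℕ) [Fact p.Prime] (hp : 5 ≤ p) (t n : ℤ) (hn : 1 ≤ n)
    (hdisc : t ^ 2 ≤ 4 * n) (hpn : ¬ (p : ℤ) ∣ n) (hpd : (p : ℤ) ∣ (t ^ 2 - 4 * n))
    (k : ℕ) (hke : Even k) (hk2 : k ≠ 2) (m : ℕ) (hm : 1 ≤ m) :
    n * P t n (k + m * (p ^ 2 - 1)) ≡ ((k : ℤ) - (m : ℤ) - 1) * n ^ (k / 2) [ZMOD (p : ℤ)] := by
  have hp2 : (2 : ZMod p) ≠ 0 := by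
    have : ((2 : ℕ) : ZMod p) ≠ 0 := by
      rw [Ne, ZMod.natCast_eq_zero_iff]
      intro h
      have := Nat.le_of_dvd (by norm_num) h
      omega
    simpa using this
  set r : ZMod p := (t : ZMod p) * (2 : ZMod p)⁻¹ with hr
  have ht2 : ((t : ZMod p)) ^ 2 = 4 * (n : ZMod p) := by
    have : ((t ^ 2 - 4 * n : ℤ) : ZMod p) = 0 := by
      rwa [ZMod.intCast_zmod_eq_zero_iff_dvd]
    push_cast at this
    linear_combination this
  have ht : (t : ZMod p) = 2 * r := by
    rw [hr]; field_simp
  have hnr : (n : ZMod p) = r ^ 2 := by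
    rw [hr]
    field_simp
    linear_combination -ht2
  have hn0 : (n : ZMod p) ≠ 0 := by
    rwa [Ne, ZMod.intCast_zmod_eq_zero_iff_dvd]
  have hr0 : r ≠ 0 := by
    intro h; rw [h] at hnr; simp at hnr; exact hn0 hnr
  set N := k + m * (p ^ 2 - 1) with hN
  have hp5 : 5 ≤ p := hp
  have hNge : 24 ≤ N := by
    have h1 : 25 ≤ p ^ 2 := by nlinarith
    have h2 : p ^ 2 - 1 ≤ m * (p ^ 2 - 1) := Nat.le_mul_of_pos_left _ hm
    omega
  rw [← ZMod.intCast_eq_intCast_iff]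
  push_cast
  rw [P_eq_a, a_cast t n r ht hnr]
  have hsub : ((N - 2 : ℕ) : ZMod p) = (N : ZMod p) - 2 := by
    rw [Nat.cast_sub (by omega)]; norm_num
  have hNcast : (N : ZMod p) = (k : ZMod p) - (m : ZMod p) := by
    rw [hN]
    push_cast
    rw [Nat.cast_sub (Nat.one_le_pow 2 p (by omega))]
    push_cast
    rw [ZMod.natCast_self]
    ring
  have hrN : r ^ (N - 2) * r ^ 2 = r ^ N := by
    rw [← pow_add, Nat.sub_add_cancel (by omega)]
  have hrpow : r ^ N = r ^ k := by
    rw [hN, pow_add, pow_mul']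
    have : r ^ (p ^ 2 - 1) = 1 := by
      have h1 : p ^ 2 - 1 = (p - 1) * (p + 1) := by
        rcases Nat.exists_eq_add_of_le (show 1 ≤ p by omega) with ⟨q, rfl⟩
        have e2 : 1 + q - 1 = q := by omega
        rw [e2]
        have e : (1 + q) ^ 2 = q * (1 + q + 1) + 1 := by ring
        omega
      rw [h1, pow_mul, ZMod.pow_card_sub_one_eq_one hr0, one_pow]
    rw [this, one_pow, mul_one]
  have hrk : r ^ k = (n : ZMod p) ^ (k / 2) := by
    rw [hnr, ← pow_mul]
    congr 1
    obtain ⟨c, hc⟩ := hke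
    omega
  calc (n : ZMod p) * ((↑(N - 2) + 1) * r ^ (N - 2))
      = ((N : ZMod p) - 1) * (r ^ (N - 2) * r ^ 2) := by rw [hsub, hnr]; ring
    _ = ((k : ZMod p) - (m : ZMod p) - 1) * (n : ZMod p) ^ (k / 2) := by
        rw [hrN, hrpow, hrk, hNcast]
end SSTrace
end
end

section
/- Let f and g be modular forms on SL₂(ℤ) of even weights k₁, k₂ ≥ 4 respectively. Then F(fg; x) = x^a · (x − 1728)^b · F(f; x) · F(g; x), where a = ⌊(δ(k₁) + δ(k₂))/3⌋ and b = ⌊(ε(k₁) + ε(k₂))/2⌋, with δ(w) := 0, 1, 2 according as w ≡ 0, 4, 2 (mod 6) and ε(w) := 0, 1 according as w ≡ 0, 2 (mod 4). -/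
open scoped UpperHalfPlane
open Complex Polynomial

noncomputable section

namespace SSTrace

/-- `q = exp(2πiz)`. -/
def qq (z : ℍ) : ℂ := Complex.exp (2 * Real.pi * Complex.I * (z : ℂ))

/-- The divisor-sum function `σ_k(n)`. -/
def sigma (k n : ℕ) : ℕ := ∑ d ∈ n.divisors, d ^ k

/-- The normalized Eisenstein series of weight `k`, given by its `q`-expansion
`E_k = 1 - (2k/B_k) ∑_{n ≥ 1} σ_{k-1}(n) qⁿ`. -/
def Eis (k : ℕ) : ℍ → ℂ :=
  fun z => 1 - (2 * k / ((bernoulli' k : ℚ) : ℂ)) *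
    ∑' n : ℕ, (sigma (k - 1) (n + 1) : ℂ) * qq z ^ (n + 1)

/-- The normalized Eisenstein series `E₄`. -/
def E4 : ℍ → ℂ := Eis 4

/-- The normalized Eisenstein series `E₆`. -/
def E6 : ℍ → ℂ := Eis 6

/-- The discriminant cusp form `Δ = (E₄³ - E₆²)/1728`. -/
def Disc : ℍ → ℂ := fun z => (E4 z ^ 3 - E6 z ^ 2) / 1728

/-- The modular `j`-function `j = E₄³/Δ`. -/
def jFun : ℍ → ℂ := fun z => E4 z ^ 3 / Disc z

/-- `δ(w) ∈ {0,1,2}` according as `w ≡ 0, 4, 2 (mod 6)` (for even `w`). -/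
def deltaExp (w : ℕ) : ℕ := if w % 6 = 0 then 0 else if w % 6 = 4 then 1 else 2

/-- `ε(w) ∈ {0,1}` according as `w ≡ 0, 2 (mod 4)` (for even `w`). -/
def epsExp (w : ℕ) : ℕ := if w % 4 = 0 then 0 else 1

/-- `m(w)` with `w = 12·m(w) + 4·δ(w) + 6·ε(w)`. -/
def mExp (w : ℕ) : ℕ := (w - 4 * deltaExp w - 6 * epsExp w) / 12

/-- `HasDivPoly w f F` says that the weight-`w` modular form `f` decomposes as
`f = Δ^m E₄^δ E₆^ε F(j)`, i.e. that `F` is the divisor polynomial of `f`. -/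
def HasDivPoly (w : ℕ) (f : ℍ → ℂ) (F : Polynomial ℂ) : Prop :=
  ∀ z : ℍ, f z = Disc z ^ mExp w * E4 z ^ deltaExp w * E6 z ^ epsExp w * F.eval (jFun z)

/-! ### Auxiliary lemmas -/

lemma sigma_one' (k : ℕ) : sigma k 1 = 1 := by simp [sigma]

lemma sigma_le' (k n : ℕ) : sigma k n ≤ n ^ (k + 1) := by
  rcases Nat.eq_zero_or_pos n with rfl | hn
  · simp [sigma]
  calc sigma k n ≤ ∑ _d ∈ n.divisors, n ^ k := by
        refine Finset.sum_le_sum fun d hd => Nat.pow_le_pow_left (Nat.divisor_le hd) k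
    _ = n.divisors.card * n ^ k := by rw [Finset.sum_const, smul_eq_mul]
    _ ≤ n * n ^ k := by
        refine Nat.mul_le_mul_right _ ?_
        calc n.divisors.card ≤ (Finset.Icc 1 n).card := by
              refine Finset.card_le_card fun d hd => ?_
              rw [Nat.mem_divisors] at hd
              rw [Finset.mem_Icc]
              exact ⟨Nat.pos_of_dvd_of_pos hd.1 hn,
                Nat.divisor_le (by rw [Nat.mem_divisors]; exact hd)⟩
          _ = n := by simp
    _ = n ^ (k+1) := by ring

lemma summable_geom_shift (k j : ℕ) :
    Summable (fun n : ℕ => ((n + j : ℝ)) ^ k * (1/2 : ℝ) ^ n) := by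
  have hgeom : Summable (fun n : ℕ => (n : ℝ) ^ k * (1/2 : ℝ) ^ n) :=
    summable_pow_mul_geometric_of_norm_lt_one k
      (by rw [Real.norm_eq_abs]; exact abs_lt.2 ⟨by norm_num, by norm_num⟩)
  have h1 := (summable_nat_add_iff j).2 hgeom
  have h2 := h1.mul_left ((2:ℝ) ^ j)
  refine h2.congr fun n => ?_
  push_cast
  field_simp
  have h2j : (1/2:ℝ)^j * 2^j = 1 := by rw [← mul_pow]; norm_num
  linear_combination ((1/2:ℝ)^n * ((n:ℝ)+j)^k) * h2j

lemma tail_bound (k : ℕ) : ∃ C : ℝ, 0 ≤ C ∧ ∀ x : ℂ, ‖x‖ ≤ 1/2 →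
    Summable (fun n : ℕ => (sigma k (n+1) : ℂ) * x ^ (n+1)) ∧
    ‖(∑' n : ℕ, (sigma k (n+1) : ℂ) * x ^ (n+1)) - x‖ ≤ C * ‖x‖^2 := by
  have hC : Summable (fun n : ℕ => ((n + 2 : ℝ)) ^ (k+1) * (1/2 : ℝ) ^ n) :=
    summable_geom_shift (k+1) 2
  refine ⟨∑' n : ℕ, ((n + 2 : ℝ)) ^ (k+1) * (1/2 : ℝ) ^ n,
    tsum_nonneg fun n => by positivity, fun x hx => ?_⟩
  have hxn : ∀ m : ℕ, ‖(sigma k (m+1) : ℂ) * x ^ (m+1)‖ ≤ ((m+1:ℝ)) ^ (k+1) * ‖x‖ ^ (m+1) := by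
    intro m
    rw [norm_mul, norm_pow, Complex.norm_natCast]
    refine mul_le_mul_of_nonneg_right ?_ (by positivity)
    calc (sigma k (m+1) : ℝ) ≤ (((m+1) ^ (k+1) : ℕ) : ℝ) := by exact_mod_cast sigma_le' k (m+1)
      _ = ((m+1:ℝ)) ^ (k+1) := by push_cast; ring
  have hs : Summable (fun n : ℕ => (sigma k (n+1) : ℂ) * x ^ (n+1)) := by
    refine Summable.of_norm_bounded ((summable_geom_shift (k+1) 1).mul_left (1/2 : ℝ))
      fun n => ?_
    refine (hxn n).trans ?_
    calc ((n+1:ℝ))^(k+1) * ‖x‖^(n+1) ≤ ((n+1:ℝ))^(k+1) * (1/2:ℝ)^(n+1) := by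
          refine mul_le_mul_of_nonneg_left ?_ (by positivity)
          exact pow_le_pow_left₀ (norm_nonneg x) hx (n+1)
      _ = (1/2:ℝ) * (((n:ℝ) + (1:ℕ)) ^ (k+1) * (1/2:ℝ)^n) := by push_cast; ring
  refine ⟨hs, ?_⟩
  rw [Summable.tsum_eq_zero_add hs]
  have h0 : (sigma k (0+1) : ℂ) * x ^ (0+1) = x := by rw [sigma_one']; simp
  rw [h0, add_sub_cancel_left]
  refine tsum_of_norm_bounded (hC.hasSum.mul_right (‖x‖^2)) fun n => ?_
  calc ‖(sigma k (n+1+1) : ℂ) * x ^ (n+1+1)‖ ≤ ((n+2:ℝ)) ^ (k+1) * ‖x‖ ^ (n+2) := by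
        have := hxn (n+1)
        push_cast at this ⊢
        convert this using 3 <;> ring
    _ ≤ ((n+2:ℝ)) ^ (k+1) * ((1/2:ℝ)^n * ‖x‖^2) := by
        refine mul_le_mul_of_nonneg_left ?_ (by positivity)
        rw [pow_add]
        refine mul_le_mul_of_nonneg_right ?_ (by positivity)
        exact pow_le_pow_left₀ (norm_nonneg x) hx n
    _ = ((n+2:ℝ)) ^ (k+1) * (1/2:ℝ)^n * ‖x‖^2 := by ring

lemma bernoulli'_six : bernoulli' 6 = 1/42 := by
  have h5 : bernoulli' 5 = 0 := bernoulli'_eq_zero_of_odd (by decide) (by norm_num)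
  rw [bernoulli'_def]
  norm_num [Finset.sum_range_succ, h5, Nat.choose]

lemma E4_apply (z : ℍ) : E4 z = 1 + 240 * ∑' n : ℕ, (sigma 3 (n + 1) : ℂ) * qq z ^ (n + 1) := by
  show Eis 4 z = _
  unfold Eis
  rw [bernoulli'_four]
  norm_num

lemma E6_apply (z : ℍ) : E6 z = 1 - 504 * ∑' n : ℕ, (sigma 5 (n + 1) : ℂ) * qq z ^ (n + 1) := by
  show Eis 6 z = _
  unfold Eis
  rw [bernoulli'_six]
  norm_num

lemma decomp (w : ℕ) (hw : Even w) (h4 : 4 ≤ w) :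
    w = 12 * mExp w + 4 * deltaExp w + 6 * epsExp w ∧ deltaExp w ≤ 2 ∧ epsExp w ≤ 1 := by
  obtain ⟨c, rfl⟩ := hw
  unfold mExp deltaExp epsExp
  split_ifs <;> omega

lemma exists_point (q : ℝ) (h0 : 0 < q) (h1 : q < 1) : ∃ z : ℍ, qq z = (q : ℂ) := by
  have hπ := Real.pi_pos
  have hlog : Real.log q < 0 := Real.log_neg h0 h1
  set t : ℝ := -(Real.log q) / (2 * Real.pi) with ht_def
  have ht : 0 < t := div_pos (by linarith) (by linarith)
  have him : (0:ℝ) < ((t:ℂ) * Complex.I).im := by simpa using ht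
  refine ⟨UpperHalfPlane.mk ((t:ℂ) * Complex.I) him, ?_⟩
  show Complex.exp _ = _
  have key : 2 * (Real.pi:ℂ) * Complex.I * ((t:ℂ) * Complex.I) = ((Real.log q : ℝ) : ℂ) := by
    rw [show 2 * (Real.pi:ℂ) * Complex.I * ((t:ℂ) * Complex.I)
        = ((2 * Real.pi * t : ℝ) : ℂ) * (Complex.I * Complex.I) from by push_cast; ring,
      Complex.I_mul_I, mul_neg_one, ← Complex.ofReal_neg]
    norm_cast
    rw [ht_def]
    have hpi : Real.pi ≠ 0 := Real.pi_ne_zero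
    field_simp
  rw [UpperHalfPlane.coe_mk, key, ← Complex.ofReal_exp, Real.exp_log h0]

set_option maxHeartbeats 1000000 in
lemma exists_large_j (B : ℝ) :
    ∃ z : ℍ, Disc z ≠ 0 ∧ E4 z ≠ 0 ∧ E6 z ≠ 0 ∧ B < ‖jFun z‖ := by
  obtain ⟨C3, hC3n, hC3⟩ := tail_bound 3
  obtain ⟨C5, hC5n, hC5⟩ := tail_bound 5
  set K : ℝ := max C3 C5 with hK_def
  have hK0 : 0 ≤ K := le_trans hC3n (le_max_left _ _)
  set A : ℝ := 504 * (1 + K) with hA_def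
  have hA1 : 1 ≤ A := by nlinarith
  set D : ℝ := 1728 * K + 4 * A^2 + A^3 with hD_def
  have hD0 : 0 ≤ D := by positivity
  set M : ℝ := max B 0 with hM_def
  have hM0 : 0 ≤ M := le_max_right _ _
  set q : ℝ := min (1/2) (min (1/(2*A)) (min (864/(D+1)) (1/(12*M+12)))) with hq_def
  have hq0 : 0 < q :=
    lt_min (by norm_num) (lt_min (by positivity) (lt_min (by positivity) (by positivity)))
  have hqh : q ≤ 1/2 := min_le_left _ _
  have hq1 : q ≤ 1 := by linarith
  have hqA : A * q ≤ 1/2 := by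
    have h : q ≤ 1/(2*A) := by
      exact (min_le_right _ _).trans (min_le_left _ _)
    have hA0 : (0:ℝ) < A := by linarith
    calc A * q ≤ A * (1/(2*A)) := mul_le_mul_of_nonneg_left h hA0.le
      _ = 1/2 := by field_simp
  have hqD : D * q ≤ 864 := by
    have hq864 : q ≤ 864/(D+1) := by
      exact (min_le_right _ _).trans ((min_le_right _ _).trans (min_le_left _ _))
    have hD1 : (0:ℝ) < D + 1 := by linarith
    calc D * q ≤ D * (864/(D+1)) := mul_le_mul_of_nonneg_left hq864 hD0
      _ ≤ 864 := by
          rw [← mul_div_assoc, div_le_iff₀ hD1]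
          nlinarith
  have hqB : (12*M+12) * q ≤ 1 := by
    have hqM : q ≤ 1/(12*M+12) := by
      exact (min_le_right _ _).trans ((min_le_right _ _).trans (min_le_right _ _))
    have h12 : (0:ℝ) < 12*M+12 := by linarith
    calc (12*M+12) * q ≤ (12*M+12) * (1/(12*M+12)) := mul_le_mul_of_nonneg_left hqM h12.le
      _ = 1 := by field_simp
  obtain ⟨z, hz⟩ := exists_point q hq0 (by linarith)
  have hnq : ‖qq z‖ = q := by rw [hz, Complex.norm_real, Real.norm_eq_abs, abs_of_pos hq0]
  have hxle : ‖qq z‖ ≤ 1/2 := by rw [hnq]; exact hqh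
  obtain ⟨hs3, hb3⟩ := hC3 (qq z) hxle
  obtain ⟨hs5, hb5⟩ := hC5 (qq z) hxle
  set S3 : ℂ := ∑' n : ℕ, (sigma 3 (n+1) : ℂ) * qq z ^ (n+1) with hS3_def
  set S5 : ℂ := ∑' n : ℕ, (sigma 5 (n+1) : ℂ) * qq z ^ (n+1) with hS5_def
  rw [hnq, hz] at hb3 hb5
  have hnS3 : ‖S3 - (q:ℂ)‖ ≤ K * q^2 := by
    refine hb3.trans ?_
    have : C3 ≤ K := le_max_left _ _
    nlinarith [sq_nonneg q]
  have hnS5 : ‖S5 - (q:ℂ)‖ ≤ K * q^2 := by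
    refine hb5.trans ?_
    have : C5 ≤ K := le_max_right _ _
    nlinarith [sq_nonneg q]
  have hE4 : E4 z = 1 + 240 * S3 := E4_apply z
  have hE6 : E6 z = 1 - 504 * S5 := E6_apply z
  -- bounds on u = E4 z - 1, v = E6 z - 1
  have hnS3' : ‖S3‖ ≤ (1+K) * q := by
    calc ‖S3‖ ≤ ‖S3 - (q:ℂ)‖ + ‖(q:ℂ)‖ := by
          simpa using norm_add_le (S3 - (q:ℂ)) (q:ℂ)
      _ ≤ K * q^2 + q := by
          rw [Complex.norm_real, Real.norm_eq_abs, abs_of_pos hq0]; linarith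
      _ ≤ (1+K) * q := by
          have hqq : q^2 ≤ q := by nlinarith
          nlinarith [mul_le_mul_of_nonneg_left hqq hK0]
  have hnS5' : ‖S5‖ ≤ (1+K) * q := by
    calc ‖S5‖ ≤ ‖S5 - (q:ℂ)‖ + ‖(q:ℂ)‖ := by
          simpa using norm_add_le (S5 - (q:ℂ)) (q:ℂ)
      _ ≤ K * q^2 + q := by
          rw [Complex.norm_real, Real.norm_eq_abs, abs_of_pos hq0]; linarith
      _ ≤ (1+K) * q := by
          have hqq : q^2 ≤ q := by nlinarith
          nlinarith [mul_le_mul_of_nonneg_left hqq hK0]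
  have hu : ‖E4 z - 1‖ ≤ A * q := by
    rw [hE4, add_sub_cancel_left, norm_mul]
    calc ‖(240:ℂ)‖ * ‖S3‖ ≤ 240 * ((1+K)*q) := by
          rw [show ‖(240:ℂ)‖ = 240 from by norm_num]
          exact mul_le_mul_of_nonneg_left hnS3' (by norm_num)
      _ ≤ A * q := by rw [hA_def]; nlinarith
  have hv : ‖E6 z - 1‖ ≤ A * q := by
    have hne : E6 z - 1 = -(504 * S5) := by rw [hE6]; ring
    rw [hne, norm_neg, norm_mul, show ‖(504:ℂ)‖ = 504 from by norm_num]
    calc 504 * ‖S5‖ ≤ 504 * ((1+K)*q) := mul_le_mul_of_nonneg_left hnS5' (by norm_num)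
      _ = A * q := by rw [hA_def]; ring
  have hE4n : (1/2:ℝ) ≤ ‖E4 z‖ := by
    have h1 := norm_sub_le (E4 z) (E4 z - 1)
    rw [show E4 z - (E4 z - 1) = (1:ℂ) from by ring, norm_one] at h1
    linarith
  have hE6n : (1/2:ℝ) ≤ ‖E6 z‖ := by
    have h1 := norm_sub_le (E6 z) (E6 z - 1)
    rw [show E6 z - (E6 z - 1) = (1:ℂ) from by ring, norm_one] at h1
    linarith
  have hDisc_eq : Disc z = (E4 z ^ 3 - E6 z ^ 2) / 1728 := rfl
  have h1728 : (1728:ℂ) * Disc z = E4 z ^ 3 - E6 z ^ 2 := by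
    rw [hDisc_eq]
    field_simp
  have expand : (1728:ℂ) * Disc z - 1728*(q:ℂ) =
      (720*(S3 - (q:ℂ)) + 1008*(S5 - (q:ℂ))) +
        (3*(E4 z - 1)^2 + (E4 z - 1)^3 - (E6 z - 1)^2) := by
    rw [h1728, hE4, hE6]
    ring
  have hq3 : q^3 ≤ q^2 := by nlinarith
  have hW : ‖(1728:ℂ)*Disc z - 1728*(q:ℂ)‖ ≤ D * q^2 := by
    rw [expand]
    have t1 : ‖(720:ℂ)*(S3 - (q:ℂ)) + 1008*(S5 - (q:ℂ))‖ ≤ 720*(K*q^2) + 1008*(K*q^2) := by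
      refine (norm_add_le _ _).trans ?_
      have a1 : ‖(720:ℂ)*(S3-(q:ℂ))‖ ≤ 720 * (K*q^2) := by
        rw [norm_mul, show ‖(720:ℂ)‖ = 720 from by norm_num]
        exact mul_le_mul_of_nonneg_left hnS3 (by norm_num)
      have a2 : ‖(1008:ℂ)*(S5-(q:ℂ))‖ ≤ 1008 * (K*q^2) := by
        rw [norm_mul, show ‖(1008:ℂ)‖ = 1008 from by norm_num]
        exact mul_le_mul_of_nonneg_left hnS5 (by norm_num)
      linarith
    have hu2 : ‖E4 z - 1‖^2 ≤ (A*q)^2 := by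
      exact pow_le_pow_left₀ (norm_nonneg _) hu 2
    have hu3 : ‖E4 z - 1‖^3 ≤ (A*q)^3 := by
      exact pow_le_pow_left₀ (norm_nonneg _) hu 3
    have hv2 : ‖E6 z - 1‖^2 ≤ (A*q)^2 := by
      exact pow_le_pow_left₀ (norm_nonneg _) hv 2
    have t2 : ‖3*(E4 z - 1)^2 + (E4 z - 1)^3 - (E6 z - 1)^2‖ ≤
        3*(A*q)^2 + (A*q)^3 + (A*q)^2 := by
      calc ‖3*(E4 z - 1)^2 + (E4 z - 1)^3 - (E6 z - 1)^2‖
          ≤ ‖3*(E4 z - 1)^2 + (E4 z - 1)^3‖ + ‖(E6 z - 1)^2‖ := norm_sub_le _ _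
        _ ≤ (‖(3:ℂ)*(E4 z - 1)^2‖ + ‖(E4 z - 1)^3‖) + ‖(E6 z - 1)^2‖ := by
            have := norm_add_le ((3:ℂ)*(E4 z - 1)^2) ((E4 z - 1)^3)
            linarith
        _ ≤ 3*(A*q)^2 + (A*q)^3 + (A*q)^2 := by
            rw [norm_mul, show ‖(3:ℂ)‖ = 3 from by norm_num, norm_pow, norm_pow, norm_pow]
            nlinarith [norm_nonneg (E4 z - 1), norm_nonneg (E6 z - 1)]
    calc ‖(720*(S3 - (q:ℂ)) + 1008*(S5 - (q:ℂ))) +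
        (3*(E4 z - 1)^2 + (E4 z - 1)^3 - (E6 z - 1)^2)‖
        ≤ (720*(K*q^2) + 1008*(K*q^2)) + (3*(A*q)^2 + (A*q)^3 + (A*q)^2) := by
          refine (norm_add_le _ _).trans ?_
          linarith
      _ ≤ D * q^2 := by rw [hD_def]; nlinarith
  have hDq : ‖Disc z - (q:ℂ)‖ ≤ q/2 := by
    have heq : ‖(1728:ℂ)*Disc z - 1728*(q:ℂ)‖ = 1728 * ‖Disc z - (q:ℂ)‖ := by
      rw [show (1728:ℂ)*Disc z - 1728*(q:ℂ) = 1728*(Disc z - (q:ℂ)) from by ring, norm_mul,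
        show ‖(1728:ℂ)‖ = 1728 from by norm_num]
    rw [heq] at hW
    nlinarith [mul_le_mul_of_nonneg_right hqD hq0.le]
  have hnqc : ‖(q:ℂ)‖ = q := by
    rw [Complex.norm_real, Real.norm_eq_abs, abs_of_pos hq0]
  have hDlow : q/2 ≤ ‖Disc z‖ := by
    have h1 := norm_sub_le (Disc z) (Disc z - (q:ℂ))
    rw [show Disc z - (Disc z - (q:ℂ)) = (q:ℂ) from by ring, hnqc] at h1
    linarith
  have hDhigh : ‖Disc z‖ ≤ 3*q/2 := by
    have h1 : ‖Disc z‖ ≤ ‖Disc z - (q:ℂ)‖ + ‖(q:ℂ)‖ := by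
      simpa using norm_add_le (Disc z - (q:ℂ)) (q:ℂ)
    rw [hnqc] at h1
    linarith
  have hDne : Disc z ≠ 0 := by
    rw [← norm_pos_iff]
    linarith
  have hE4ne : E4 z ≠ 0 := by
    rw [← norm_pos_iff]
    linarith
  have hE6ne : E6 z ≠ 0 := by
    rw [← norm_pos_iff]
    linarith
  refine ⟨z, hDne, hE4ne, hE6ne, ?_⟩
  have hjn : 1/(12*q) ≤ ‖jFun z‖ := by
    have hjf : jFun z = E4 z ^ 3 / Disc z := rfl
    rw [hjf, norm_div, norm_pow]
    have h8 : (1/8 : ℝ) ≤ ‖E4 z‖^3 := by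
      have h := pow_le_pow_left₀ (by norm_num : (0:ℝ) ≤ 1/2) hE4n 3
      calc (1/8:ℝ) = (1/2:ℝ)^3 := by norm_num
        _ ≤ ‖E4 z‖^3 := h
    calc 1/(12*q) = (1/8)/(3*q/2) := by
          rw [div_eq_div_iff (by positivity) (by positivity)]
          ring
      _ ≤ ‖E4 z‖^3 / ‖Disc z‖ := div_le_div₀ (by positivity) h8 (by linarith) hDhigh
  have hBM : B ≤ M := le_max_left _ _
  have hMlt : M < 1/(12*q) := by
    rw [lt_div_iff₀ (by positivity)]
    nlinarith
  linarith

set_option maxHeartbeats 1000000 in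
/-- Proposition 3.1: the divisor polynomial of a product of modular forms `f, g` of even
weights `k₁, k₂ ≥ 4` satisfies `F(fg;x) = x^a (x-1728)^b F(f;x) F(g;x)` with
`a = ⌊(δ(k₁)+δ(k₂))/3⌋` and `b = ⌊(ε(k₁)+ε(k₂))/2⌋`. -/
theorem divPoly_mul (k₁ k₂ : ℕ) (he₁ : Even k₁) (he₂ : Even k₂) (h₁ : 4 ≤ k₁) (h₂ : 4 ≤ k₂)
    (f : ModularForm (CongruenceSubgroup.Gamma 1) (k₁ : ℤ))
    (g : ModularForm (CongruenceSubgroup.Gamma 1) (k₂ : ℤ))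
    (Ff Fg Ffg : Polynomial ℂ)
    (hf : HasDivPoly k₁ (⇑f) Ff) (hg : HasDivPoly k₂ (⇑g) Fg)
    (hfg : HasDivPoly (k₁ + k₂) (fun z => f z * g z) Ffg) :
    Ffg = X ^ ((deltaExp k₁ + deltaExp k₂) / 3) *
      (X - C (1728 : ℂ)) ^ ((epsExp k₁ + epsExp k₂) / 2) * Ff * Fg := by
  set a : ℕ := (deltaExp k₁ + deltaExp k₂) / 3 with ha_def
  set b : ℕ := (epsExp k₁ + epsExp k₂) / 2 with hb_def
  obtain ⟨hw1, hd1, he1⟩ := decomp k₁ he₁ h₁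
  obtain ⟨hw2, hd2, he2⟩ := decomp k₂ he₂ h₂
  obtain ⟨hw12, hd12, he12⟩ := decomp (k₁+k₂) (he₁.add he₂) (by omega)
  have hM : mExp (k₁+k₂) = mExp k₁ + mExp k₂ + a + b := by omega
  have hd : deltaExp k₁ + deltaExp k₂ = deltaExp (k₁+k₂) + 3*a := by omega
  have he : epsExp k₁ + epsExp k₂ = epsExp (k₁+k₂) + 2*b := by omega
  by_contra hne
  have hP : Ffg - (X^a * (X - C (1728:ℂ))^b * Ff * Fg) ≠ 0 := sub_ne_zero.2 hne
  obtain ⟨Bd, hBd⟩ := Set.exists_upper_bound_image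
    {x : ℂ | (Ffg - (X^a * (X - C (1728:ℂ))^b * Ff * Fg)).IsRoot x} (fun x => ‖x‖)
    (Polynomial.finite_setOf_isRoot hP)
  obtain ⟨z, hD, h4, h6, hj⟩ := exists_large_j ‖Bd‖
  have hroot : (Ffg - (X^a * (X - C (1728:ℂ))^b * Ff * Fg)).IsRoot (jFun z) := by
    have hjD : jFun z * Disc z = E4 z ^ 3 := div_mul_cancel₀ _ hD
    have h1728 : E4 z ^ 3 - E6 z ^ 2 = 1728 * Disc z := by
      have : Disc z = (E4 z ^ 3 - E6 z ^ 2) / 1728 := rfl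
      rw [this]
      field_simp
    have hjD2 : (jFun z - 1728) * Disc z = E6 z ^ 2 := by
      linear_combination hjD + h1728
    have hmain : f z * g z = Disc z ^ mExp (k₁+k₂) * E4 z ^ deltaExp (k₁+k₂) *
        E6 z ^ epsExp (k₁+k₂) * Ffg.eval (jFun z) := hfg z
    rw [hf z, hg z] at hmain
    have hfac : Disc z ^ (mExp k₁ + mExp k₂ + a + b) * E4 z ^ deltaExp (k₁+k₂) *
        E6 z ^ epsExp (k₁+k₂) ≠ 0 :=
      mul_ne_zero (mul_ne_zero (pow_ne_zero _ hD) (pow_ne_zero _ h4)) (pow_ne_zero _ h6)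
    have hev : Ffg.eval (jFun z) =
        jFun z ^ a * (jFun z - 1728) ^ b * Ff.eval (jFun z) * Fg.eval (jFun z) := by
      apply mul_left_cancel₀ hfac
      calc Disc z ^ (mExp k₁ + mExp k₂ + a + b) * E4 z ^ deltaExp (k₁+k₂) *
            E6 z ^ epsExp (k₁+k₂) * Ffg.eval (jFun z)
          = Disc z ^ mExp (k₁+k₂) * E4 z ^ deltaExp (k₁+k₂) *
            E6 z ^ epsExp (k₁+k₂) * Ffg.eval (jFun z) := by rw [hM]
        _ = (Disc z ^ mExp k₁ * E4 z ^ deltaExp k₁ * E6 z ^ epsExp k₁ * Ff.eval (jFun z)) *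
            (Disc z ^ mExp k₂ * E4 z ^ deltaExp k₂ * E6 z ^ epsExp k₂ * Fg.eval (jFun z)) :=
            hmain.symm
        _ = Disc z ^ (mExp k₁ + mExp k₂) * E4 z ^ (deltaExp k₁ + deltaExp k₂) *
            E6 z ^ (epsExp k₁ + epsExp k₂) * (Ff.eval (jFun z) * Fg.eval (jFun z)) := by
            rw [pow_add, pow_add, pow_add]; ring
        _ = Disc z ^ (mExp k₁ + mExp k₂) * E4 z ^ (deltaExp (k₁+k₂) + 3*a) *
            E6 z ^ (epsExp (k₁+k₂) + 2*b) * (Ff.eval (jFun z) * Fg.eval (jFun z)) := by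
            rw [hd, he]
        _ = Disc z ^ (mExp k₁ + mExp k₂) * E4 z ^ deltaExp (k₁+k₂) * E6 z ^ epsExp (k₁+k₂) *
            ((E4 z ^ 3) ^ a * (E6 z ^ 2) ^ b * (Ff.eval (jFun z) * Fg.eval (jFun z))) := by
            rw [pow_add (E4 z) (deltaExp (k₁+k₂)) (3*a), pow_add (E6 z) (epsExp (k₁+k₂)) (2*b),
              pow_mul (E4 z) 3 a, pow_mul (E6 z) 2 b]
            ring
        _ = Disc z ^ (mExp k₁ + mExp k₂) * E4 z ^ deltaExp (k₁+k₂) * E6 z ^ epsExp (k₁+k₂) *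
            ((jFun z * Disc z) ^ a * ((jFun z - 1728) * Disc z) ^ b *
              (Ff.eval (jFun z) * Fg.eval (jFun z))) := by
            rw [hjD, hjD2]
        _ = Disc z ^ (mExp k₁ + mExp k₂ + a + b) * E4 z ^ deltaExp (k₁+k₂) *
            E6 z ^ epsExp (k₁+k₂) *
            (jFun z ^ a * (jFun z - 1728) ^ b * Ff.eval (jFun z) * Fg.eval (jFun z)) := by
            rw [mul_pow (jFun z) (Disc z) a, mul_pow (jFun z - 1728) (Disc z) b,
              pow_add (Disc z) (mExp k₁ + mExp k₂ + a) b, pow_add (Disc z) (mExp k₁ + mExp k₂) a]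
            ring
    simp only [Polynomial.IsRoot, Polynomial.eval_sub, Polynomial.eval_mul, Polynomial.eval_pow,
      Polynomial.eval_X, Polynomial.eval_C, hev]
    ring
  exact absurd (hBd _ hroot) (not_le.2 hj)

end SSTrace
end
end

section
/- Let p ≥ 5 be prime and let t, n be integers with n ≥ 1, t² − 4n < 0, p ∤ n, and p ∤ (t² − 4n). Then n · P_{p²−1}(t, n) ≡ −1 (mod p). -/
open scoped UpperHalfPlane
open Complex Polynomial

noncomputable section

namespace SSTrace

/-- The Lucas-type sequence with the same recurrence. -/
def U (t n : ℤ) : ℕ → ℤ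
  | 0 => 1
  | 1 => t
  | (m+2) => t * U t n (m+1) - n * U t n m

lemma coeff_eq_U (t n : ℤ) (m : ℕ) :
    PowerSeries.coeff (R := ℤ) m
      (PowerSeries.invOfUnit
        (1 - PowerSeries.C (R := ℤ) t * PowerSeries.X + PowerSeries.C (R := ℤ) n * PowerSeries.X ^ 2) 1)
      = U t n m := by
  set f : PowerSeries ℤ :=
    1 - PowerSeries.C (R := ℤ) t * PowerSeries.X + PowerSeries.C (R := ℤ) n * PowerSeries.X ^ 2 with hf
  set g := PowerSeries.invOfUnit f 1 with hg
  have hc : PowerSeries.constantCoeff (R := ℤ) f = ((1 : ℤˣ) : ℤ) := by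
    simp [hf]
  have hmul : f * g = 1 := PowerSeries.mul_invOfUnit f 1 hc
  -- coefficient extraction lemmas
  have hCx : ∀ (a : ℤ) (k : ℕ),
      PowerSeries.coeff (R := ℤ) (k+1) (PowerSeries.C (R := ℤ) a * PowerSeries.X * g)
        = a * PowerSeries.coeff (R := ℤ) k g := by
    intro a k
    rw [mul_comm, ← mul_assoc, PowerSeries.coeff_succ_mul_X, PowerSeries.coeff_mul_C, mul_comm]
  have hCx2 : ∀ (a : ℤ) (k : ℕ),
      PowerSeries.coeff (R := ℤ) (k+2) (PowerSeries.C (R := ℤ) a * PowerSeries.X ^ 2 * g)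
        = a * PowerSeries.coeff (R := ℤ) k g := by
    intro a k
    have : PowerSeries.C (R := ℤ) a * PowerSeries.X ^ 2 * g
        = g * PowerSeries.C (R := ℤ) a * PowerSeries.X * PowerSeries.X := by ring
    rw [this, PowerSeries.coeff_succ_mul_X]
    show PowerSeries.coeff (R := ℤ) (k+1) (g * PowerSeries.C (R := ℤ) a * PowerSeries.X) = _
    rw [PowerSeries.coeff_succ_mul_X, PowerSeries.coeff_mul_C, mul_comm]
  have h0 : PowerSeries.coeff (R := ℤ) 0 g = 1 := by
    have := congrArg (PowerSeries.coeff (R := ℤ) 0) hmul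
    simp only [hf, add_mul, sub_mul, one_mul, map_add, map_sub] at this
    simpa [PowerSeries.coeff_zero_eq_constantCoeff] using this
  have h1 : PowerSeries.coeff (R := ℤ) 1 g = t := by
    have := congrArg (PowerSeries.coeff (R := ℤ) 1) hmul
    simp only [hf, add_mul, sub_mul, one_mul, map_add, map_sub, hCx t 0] at this
    have h2 : PowerSeries.coeff (R := ℤ) 1 (PowerSeries.C (R := ℤ) n * PowerSeries.X ^ 2 * g) = 0 := by
      have : PowerSeries.C (R := ℤ) n * PowerSeries.X ^ 2 * g
          = PowerSeries.C (R := ℤ) n * (PowerSeries.X * g) * PowerSeries.X := by ring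
      rw [this, show (1:ℕ) = 0 + 1 from rfl, PowerSeries.coeff_succ_mul_X]
      simp [PowerSeries.coeff_mul]
    rw [h2, h0] at this
    simp at this
    linarith [this]
  have hrec : ∀ k : ℕ, PowerSeries.coeff (R := ℤ) (k+2) g
      = t * PowerSeries.coeff (R := ℤ) (k+1) g - n * PowerSeries.coeff (R := ℤ) k g := by
    intro k
    have := congrArg (PowerSeries.coeff (R := ℤ) (k+2)) hmul
    simp only [hf, add_mul, sub_mul, one_mul, map_add, map_sub,
      hCx t (k+1), hCx2 n k] at this
    have hone : PowerSeries.coeff (R := ℤ) (k+2) (1 : PowerSeries ℤ) = 0 := by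
      simp
    rw [hone] at this
    linarith [this]
  induction m using Nat.strong_induction_on with
  | _ m ih =>
    match m with
    | 0 => simpa [U] using h0
    | 1 => simpa [U] using h1
    | (k+2) =>
      rw [hrec k, ih (k+1) (by omega), ih k (by omega)]
      rfl

lemma U_closed {R : Type} [CommRing R] (t n : ℤ) (a b : R)
    (hab : a + b = (t : R)) (hmul : a * b = (n : R)) :
    ∀ m : ℕ, (a - b) * (U t n m : R) = a ^ (m+1) - b ^ (m+1) := by
  have key : ∀ m : ℕ, (a - b) * (U t n m : R) = a ^ (m+1) - b ^ (m+1) ∧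
      (a - b) * (U t n (m+1) : R) = a ^ (m+2) - b ^ (m+2) := by
    intro m
    induction m with
    | zero =>
      constructor
      · simp [U]
      · show (a - b) * ((U t n 1 : ℤ) : R) = _
        rw [show U t n 1 = t from rfl]
        rw [← hab]; ring
    | succ k ih =>
      refine ⟨ih.2, ?_⟩
      show (a - b) * ((U t n (k+2) : ℤ) : R) = _
      rw [show U t n (k+2) = t * U t n (k+1) - n * U t n k from rfl]
      push_cast
      rw [← hab, ← hmul]
      linear_combination (a + b) * ih.2 - (a * b) * ih.1
  exact fun m => (key m).1

/-- If `t² - 4n < 0`, `p ∤ n` and `p ∤ t² - 4n`, then `n · P_{p²-1}(t,n) ≡ -1 (mod p)`. -/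
theorem n_mul_P_pow_sub_one (p : ℕ) [Fact p.Prime] (hp : 5 ≤ p) (t n : ℤ) (hn : 1 ≤ n)
    (hdisc : t ^ 2 - 4 * n < 0) (hpn : ¬ (p : ℤ) ∣ n)
    (hpd : ¬ (p : ℤ) ∣ (t ^ 2 - 4 * n)) :
    n * P t n (p ^ 2 - 1) ≡ -1 [ZMOD (p : ℤ)] := by
  have hP : P t n (p ^ 2 - 1) = U t n (p ^ 2 - 3) := by
    have : p ^ 2 - 1 - 2 = p ^ 2 - 3 := by omega
    rw [P, this, coeff_eq_U]
  rw [hP, ← ZMod.intCast_eq_intCast_iff]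
  push_cast
  -- work in the algebraic closure K
  set K := AlgebraicClosure (ZMod p) with hK
  have hinj : Function.Injective (algebraMap (ZMod p) K) :=
    (algebraMap (ZMod p) K).injective
  apply hinj
  rw [map_mul, map_neg, map_one]
  set T : K := algebraMap (ZMod p) K ((t : ZMod p)) with hT
  set N : K := algebraMap (ZMod p) K ((n : ZMod p)) with hN
  have hTZ : T = ((t : ℤ) : K) := by
    rw [hT, ← map_intCast (algebraMap (ZMod p) K)]
  have hNZ : N = ((n : ℤ) : K) := by
    rw [hN, ← map_intCast (algebraMap (ZMod p) K)]
  have hNne : N ≠ 0 := by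
    rw [hN]
    intro h
    apply hpn
    rw [← ZMod.intCast_zmod_eq_zero_iff_dvd]
    exact hinj (by simpa using h)
  -- a root of X² - T X + N
  obtain ⟨a, ha⟩ : ∃ a : K, (Polynomial.X ^ 2 - Polynomial.C T * Polynomial.X
      + Polynomial.C N).IsRoot a := by
    apply IsAlgClosed.exists_root
    have : (Polynomial.X ^ 2 - Polynomial.C T * Polynomial.X
        + Polynomial.C N : Polynomial K).degree = 2 := by
      compute_degree!
    simp [this]
  have haeq : a ^ 2 - T * a + N = 0 := by
    simpa [Polynomial.IsRoot] using ha
  set b : K := T - a with hb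
  have habs : a + b = T := by rw [hb]; ring
  have habm : a * b = N := by rw [hb]; linear_combination -haeq
  have hane : a ≠ 0 := by
    intro h; apply hNne; rw [← habm, h, zero_mul]
  have hbne : b ≠ 0 := by
    intro h; apply hNne; rw [← habm, h, mul_zero]
  have hDne : a - b ≠ 0 := by
    intro h
    apply hpd
    rw [← ZMod.intCast_zmod_eq_zero_iff_dvd]
    apply hinj
    rw [map_zero, map_intCast]
    push_cast
    rw [← hTZ, ← hNZ]
    have h2 : T ^ 2 - 4 * N = (a - b) ^ 2 := by rw [← habs, ← habm]; ring
    rw [h2, h]; ring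
  -- Frobenius facts
  haveI : CharP K p := charP_of_injective_algebraMap hinj p
  have hpprime : p.Prime := Fact.out
  haveI : ExpChar K p := ExpChar.prime hpprime
  have hTp : T ^ p = T := by
    rw [hT, ← map_pow, ZMod.pow_card]
  have hNp : N ^ p = N := by
    rw [hN, ← map_pow, ZMod.pow_card]
  have hroot : (a ^ p - a) * (a ^ p - b) = 0 := by
    have h2 : (a ^ p) ^ 2 - T * a ^ p + N = 0 := by
      calc (a ^ p) ^ 2 - T * a ^ p + N
          = (a ^ 2) ^ p - T ^ p * a ^ p + N ^ p := by
            rw [hTp, hNp, ← pow_mul, ← pow_mul, Nat.mul_comm]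
        _ = (a ^ 2 - T * a) ^ p + N ^ p := by rw [sub_pow_char, mul_pow]
        _ = (a ^ 2 - T * a + N) ^ p := by rw [add_pow_char]
        _ = 0 := by rw [haeq, zero_pow hpprime.ne_zero]
    linear_combination h2 - a ^ p * habs + habm
  have hap2 : a ^ (p ^ 2) = a := by
    rcases mul_eq_zero.mp hroot with h | h
    · have h' : a ^ p = a := by linear_combination h
      rw [pow_two, pow_mul, h', h']
    · have h' : a ^ p = b := by linear_combination h
      have hbp : b ^ p = a := by
        rw [hb, sub_pow_char, hTp, h', hb]; ring
      rw [pow_two, pow_mul, h', hbp]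
  have hTp2 : T ^ (p ^ 2) = T := by rw [pow_two, pow_mul, hTp, hTp]
  have hbp2 : b ^ (p ^ 2) = b := by
    rw [hb, sub_pow_char_pow, hTp2, hap2]
  have hp2 : 25 ≤ p ^ 2 := by nlinarith
  have ha1 : a ^ (p ^ 2 - 1) = 1 := by
    apply mul_left_cancel₀ hane
    rw [mul_one, ← pow_succ', show p ^ 2 - 1 + 1 = p ^ 2 by omega, hap2]
  have hb1 : b ^ (p ^ 2 - 1) = 1 := by
    apply mul_left_cancel₀ hbne
    rw [mul_one, ← pow_succ', show p ^ 2 - 1 + 1 = p ^ 2 by omega, hbp2]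
  -- closed form
  have hcl := U_closed t n a b (by rw [habs, hTZ]) (by rw [habm, hNZ]) (p ^ 2 - 3)
  rw [show p ^ 2 - 3 + 1 = p ^ 2 - 2 by omega] at hcl
  have ea : a ^ (p ^ 2 - 2) * a = 1 := by
    rw [← pow_succ, show p ^ 2 - 2 + 1 = p ^ 2 - 1 by omega, ha1]
  have eb : b ^ (p ^ 2 - 2) * b = 1 := by
    rw [← pow_succ, show p ^ 2 - 2 + 1 = p ^ 2 - 1 by omega, hb1]
  have hkey : (a - b) * (((U t n (p ^ 2 - 3) : ℤ) : K) * N) = (a - b) * (-1) := by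
    rw [← habm]
    calc (a - b) * (((U t n (p ^ 2 - 3) : ℤ) : K) * (a * b))
        = ((a - b) * ((U t n (p ^ 2 - 3) : ℤ) : K)) * (a * b) := by ring
      _ = (a ^ (p ^ 2 - 2) - b ^ (p ^ 2 - 2)) * (a * b) := by rw [hcl]
      _ = (a ^ (p ^ 2 - 2) * a) * b - (b ^ (p ^ 2 - 2) * b) * a := by ring
      _ = b - a := by rw [ea, eb]; ring
      _ = (a - b) * (-1) := by ring
  have hfin := mul_left_cancel₀ hDne hkey
  rw [mul_comm]
  exact hfin

end SSTrace
end
end
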